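/- Let n ≥ 2 and ρ > 0, and suppose a bounded open set Ω ⊂ ℝ^n satisfies ρ-reflection. Then Ω ∈ S_r with r := ( (inf_{x ∈ ∂Ω} |x|)² − ρ² )^{1/2}. -/

import Mathlib

open MeasureTheory Metric Set
open scoped ENNReal RealInnerProductSpace

noncomputable section

/-- `Ω` is a bounded open set, star-shaped with respect to the ball `B_r(0)`. -/
def StarShaped (n : ℕ) (r : ℝ) (Ω : Set (EuclideanSpace ℝ (Fin n))) : Prop :=
  IsOpen Ω ∧ Bornology.IsBounded Ω ∧
    ∀ y ∈ ball (0 : EuclideanSpace ℝ (Fin n)) r, ∀ x ∈ Ω, segment ℝ y x ⊆ Ω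

/-- `Ω` satisfies `ρ`-reflection: it contains `B̄_ρ(0)` and for every unit direction `ν`
and every `s > ρ`, the reflection across the hyperplane `{x·ν = s}` maps
`Ω ∩ {x·ν > s}` into `Ω ∩ {x·ν < s}`. -/
def RhoReflection (n : ℕ) (ρ : ℝ) (Ω : Set (EuclideanSpace ℝ (Fin n))) : Prop :=
  closedBall (0 : EuclideanSpace ℝ (Fin n)) ρ ⊆ Ω ∧
    ∀ ν : EuclideanSpace ℝ (Fin n), ‖ν‖ = 1 → ∀ s : ℝ, ρ < s →
      (fun x => x - (2 * ⟪x - s • ν, ν⟫) • ν) '' (Ω ∩ {x | s < ⟪x, ν⟫}) ⊆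
        Ω ∩ {x | ⟪x, ν⟫ < s}

/-- If a bounded open set `Ω` satisfies `ρ`-reflection, then `Ω ∈ S_r` with
`r = ((inf_{x ∈ ∂Ω} |x|)² - ρ²)^{1/2}`. -/
theorem statement12 (n : ℕ) (hn : 2 ≤ n) (ρ : ℝ) (hρ : 0 < ρ)
    (Ω : Set (EuclideanSpace ℝ (Fin n))) (hopen : IsOpen Ω)
    (hbdd : Bornology.IsBounded Ω) (hrefl : RhoReflection n ρ Ω) :
    StarShaped n (Real.sqrt ((sInf ((fun x => ‖x‖) '' frontier Ω)) ^ 2 - ρ ^ 2)) Ω := by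
  set d : ℝ := sInf ((fun x => ‖x‖) '' frontier Ω) with hd
  refine ⟨hopen, hbdd, fun y hy x hx => ?_⟩
  rw [mem_ball, dist_zero_right] at hy
  by_contra hseg
  rw [Set.not_subset] at hseg
  obtain ⟨p, hpseg, hpΩ⟩ := hseg
  -- x ≠ y
  have hxy : x - y ≠ 0 := by
    intro h
    rw [sub_eq_zero] at h
    subst h
    rw [segment_same] at hpseg
    rw [Set.mem_singleton_iff] at hpseg
    subst hpseg
    exact hpΩ hx
  set L : ℝ := ‖x - y‖ with hLdef
  have hL : 0 < L := norm_pos_iff.mpr hxy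
  set u : EuclideanSpace ℝ (Fin n) := L⁻¹ • (x - y) with hudef
  have hu : ‖u‖ = 1 := by
    rw [hudef, norm_smul, norm_inv, Real.norm_of_nonneg hL.le]
    field_simp
    exact hLdef.symm
  have huu : ⟪u, u⟫ = 1 := by
    rw [real_inner_self_eq_norm_sq, hu]; norm_num
  have hxeq : x = y + L • u := by
    rw [hudef, smul_smul, mul_inv_cancel₀ hL.ne', one_smul]
    abel
  -- the bad set on the segment
  set g : ℝ → EuclideanSpace ℝ (Fin n) := fun t => y + t • (x - y) with hgdef
  have hgcont : Continuous g := by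
    exact continuous_const.add (continuous_id.smul continuous_const)
  set T : Set ℝ := {t : ℝ | t ∈ Icc (0:ℝ) 1 ∧ g t ∉ Ω} with hTdef
  have hTne : T.Nonempty := by
    rw [segment_eq_image' ℝ y x] at hpseg
    obtain ⟨t, ht, hteq⟩ := hpseg
    exact ⟨t, ht, by rwa [hgdef, hteq]⟩
  have hTclosed : IsClosed T := by
    have : T = Icc (0:ℝ) 1 ∩ g ⁻¹' Ωᶜ := rfl
    rw [this]
    exact isClosed_Icc.inter (hopen.isClosed_compl.preimage hgcont)
  have hTcomp : IsCompact T :=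
    isCompact_Icc.of_isClosed_subset hTclosed (fun t ht => ht.1)
  set t₀ : ℝ := sSup T with ht₀def
  have ht₀T : t₀ ∈ T := hTcomp.sSup_mem hTne
  set z : EuclideanSpace ℝ (Fin n) := g t₀ with hzdef
  have hzΩ : z ∉ Ω := ht₀T.2
  have ht₀1 : t₀ < 1 := by
    rcases lt_or_eq_of_le ht₀T.1.2 with h | h
    · exact h
    · exfalso; apply hzΩ
      rw [hzdef, hgdef]; simp only [h, one_smul]
      rwa [add_sub_cancel]
  have hmem : ∀ t ∈ Ioc t₀ 1, g t ∈ Ω := by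
    intro t ht
    by_contra h
    have htT : t ∈ T := ⟨⟨le_trans ht₀T.1.1 ht.1.le, ht.2⟩, h⟩
    exact absurd (le_csSup hTcomp.bddAbove htT) (not_le.mpr ht.1)
  have hzcl : z ∈ closure Ω := by
    have h1 : t₀ ∈ closure (Ioc t₀ 1) := by
      rw [closure_Ioc ht₀1.ne]
      exact ⟨le_refl _, ht₀1.le⟩
    exact map_mem_closure (f := g) hgcont h1 hmem
  have hzfr : z ∈ frontier Ω := ⟨hzcl, by rwa [hopen.interior_eq]⟩
  have hnorm_mem : ‖z‖ ∈ (fun x => ‖x‖) '' frontier Ω := ⟨z, hzfr, rfl⟩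
  have hdz : d ≤ ‖z‖ := csInf_le ⟨0, by rintro b ⟨w, -, rfl⟩; exact norm_nonneg w⟩ hnorm_mem
  have hd0 : 0 ≤ d :=
    le_csInf ⟨‖z‖, hnorm_mem⟩ (by rintro b ⟨w, -, rfl⟩; exact norm_nonneg w)
  -- radius facts
  have hrpos : 0 < Real.sqrt (d ^ 2 - ρ ^ 2) := lt_of_le_of_lt (norm_nonneg y) hy
  have hdρ : ρ ^ 2 < d ^ 2 := by
    have := Real.sqrt_pos.mp hrpos; linarith
  have hy2 : ‖y‖ ^ 2 < d ^ 2 - ρ ^ 2 := by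
    have h1 : ‖y‖ ^ 2 < Real.sqrt (d ^ 2 - ρ ^ 2) ^ 2 :=
      pow_lt_pow_left₀ hy (norm_nonneg y) two_ne_zero
    rwa [Real.sq_sqrt (by linarith : (0:ℝ) ≤ d ^ 2 - ρ ^ 2)] at h1
  -- coordinates along u
  set τ : ℝ := t₀ * L with hτdef
  have hτ0 : 0 ≤ τ := mul_nonneg ht₀T.1.1 hL.le
  have hτL : τ < L := by
    have := mul_lt_of_lt_one_left hL ht₀1
    simpa [hτdef] using this
  have hzeq : z = y + τ • u := by
    rw [hzdef, hgdef, hudef, hτdef, smul_smul, mul_assoc, mul_inv_cancel₀ hL.ne', mul_one]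
  set a : ℝ := ⟪y, u⟫ with hadef
  have hzu : ⟪z, u⟫ = a + τ := by
    rw [hzeq, inner_add_left, real_inner_smul_left, huu, mul_one]
  have hxu : ⟪x, u⟫ = a + L := by
    rw [hxeq, inner_add_left, real_inner_smul_left, huu, mul_one]
  have hnz2 : ‖z‖ ^ 2 = ‖y‖ ^ 2 + 2 * (τ * a) + τ ^ 2 := by
    rw [hzeq, norm_add_sq_real, real_inner_smul_right, norm_smul,
      Real.norm_of_nonneg hτ0, hu, mul_one, ← hadef]
  have hdz2 : d ^ 2 ≤ ‖z‖ ^ 2 := pow_le_pow_left₀ hd0 hdz 2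
  have hkey : ρ ^ 2 + a ^ 2 < (a + τ) ^ 2 := by nlinarith
  have hzupos : 0 < a + τ := by
    by_contra h
    push_neg at h
    have ha0 : a ≤ 0 := by linarith
    have h2 : a ^ 2 - (a + τ) ^ 2 = τ * (-(a + (a + τ))) := by ring
    have h3 : 0 ≤ τ * (-(a + (a + τ))) := mul_nonneg hτ0 (by linarith)
    have h4 : 0 < ρ ^ 2 := pow_pos hρ 2
    linarith
  have hzuρ : ρ < a + τ := by
    refine lt_of_pow_lt_pow_left₀ 2 hzupos.le ?_
    linarith [sq_nonneg a]
  -- the reflection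
  set s : ℝ := ((a + τ) + (a + L)) / 2 with hsdef
  have hs1 : ρ < s := by rw [hsdef]; linarith
  have hs2 : s < ⟪x, u⟫ := by rw [hxu, hsdef]; linarith
  have key := hrefl.2 u hu s hs1 (Set.mem_image_of_mem _ ⟨hx, hs2⟩)
  have hcoef : (2 * ⟪x - s • u, u⟫) = L - τ := by
    rw [inner_sub_left, real_inner_smul_left, huu, mul_one, hxu, hsdef]
    ring
  have himg : x - (2 * ⟪x - s • u, u⟫) • u = z := by
    rw [hcoef, hzeq, hxeq]
    module
  rw [himg] at key
  exact hzΩ key.1
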